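/- For every i ∈ ZMod 3 and every r ≥ 1, the right complement of a_iʳ equals a_{i+2}·a_{i+3}·⋯·a_{i+r+1}; that is, (a_iʳ)* = ∏_{j=2}^{r+1} a_{i+j}, indices modulo 3. -/

import Mathlib

namespace Braid

/-- Relations of the dual (band-generator) presentation of the 3-braid group:
`a (i+1) * a i = a (i+2) * a (i+1)` for all `i : ZMod 3`. -/
def braidRels : Set (FreeGroup (ZMod 3)) :=
  { r | ∃ i : ZMod 3,
      r = FreeGroup.of (i + 1) * FreeGroup.of i *
          (FreeGroup.of (i + 2) * FreeGroup.of (i + 1))⁻¹ }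

/-- The 3-braid group with the band-generator presentation. -/
abbrev B3 := PresentedGroup braidRels

/-- The band generators `a i`, `i : ZMod 3`. -/
def a (i : ZMod 3) : B3 := PresentedGroup.of i

/-- The fundamental element `δ = a₂ * a₁`. -/
def δ : B3 := a 2 * a 1

/-- The submonoid of positive braids. -/
def Pos : Submonoid B3 := Submonoid.closure (Set.range a)

/-- The exponent-sum homomorphism, sending each generator to `1 : ℤ`. -/
def eHom : B3 →* Multiplicative ℤ :=
  PresentedGroup.toGroup (f := fun _ => Multiplicative.ofAdd (1 : ℤ)) (by
    rintro r ⟨i, rfl⟩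
    simp only [map_mul, map_inv, FreeGroup.lift_apply_of]
    group)

/-- The exponent sum (letter length on positive braids) as an integer. -/
def elen (x : B3) : ℤ := Multiplicative.toAdd (eHom x)

/-- The right complement `X* = X⁻¹ * δ^{e(X)}`. -/
def rc (X : B3) : B3 := X⁻¹ * δ ^ elen X

/-- The `n`-th power of the rotation automorphism `τ`: `τ^n (x) = δ^{-n} * x * δ^n`. -/
def tauPow (n : ℤ) (x : B3) : B3 := δ ^ (-n) * x * δ ^ n

/-- The positive braid represented by a list of generator indices. -/
def wordProd (l : List (ZMod 3)) : B3 := (l.map a).prod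

/-- A word is nondecreasing if each letter index is the previous one or the previous one
plus `1` (mod 3). -/
def NDWord (l : List (ZMod 3)) : Prop :=
  l.Chain' (fun x y => y = x ∨ y = x + 1)

/-- The syllable number of a word: the number of maximal constant blocks. -/
def syl : List (ZMod 3) → ℕ
  | [] => 0
  | [_] => 1
  | x :: y :: t => (if x = y then 0 else 1) + syl (y :: t)

/-- The permutations underlying the band generators. -/
def perm3 (i : ZMod 3) : Equiv.Perm (Fin 3) :=
  if i = 0 then Equiv.swap 0 2 else if i = 1 then Equiv.swap 0 1 else Equiv.swap 1 2

lemma perm3_rel : ∀ i : ZMod 3,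
    perm3 (i + 1) * perm3 i * (perm3 (i + 2) * perm3 (i + 1))⁻¹ = 1 := by decide

/-- The homomorphism to the symmetric group on 3 letters (underlying permutation). -/
def permOf : B3 →* Equiv.Perm (Fin 3) :=
  PresentedGroup.toGroup (f := perm3) (by
    rintro r ⟨i, rfl⟩
    simp only [map_mul, map_inv, FreeGroup.lift_apply_of]
    exact perm3_rel i)

/-- The set of band generators and their inverses. -/
def genSet : Set B3 := Set.range a ∪ Set.range (fun i => (a i)⁻¹)

/-- The band-generator word length of a 3-braid. -/
noncomputable def wordLen (x : B3) : ℕ :=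
  sInf { n | ∃ s : List B3, s.length = n ∧ (∀ g ∈ s, g ∈ genSet) ∧ s.prod = x }

/-- The minimal band-generator word length in the conjugacy class. -/
noncomputable def minConjLen (x : B3) : ℕ :=
  sInf { n | ∃ y, IsConj x y ∧ wordLen y = n }

/-- `α` is a summit element with summit exponent `u` if `δ^{-u} * α` is positive and `u` is
the maximal such exponent over the conjugacy class. -/
def IsSummit (α : B3) (u : ℤ) : Prop :=
  δ ^ (-u) * α ∈ Pos ∧ ∀ β : B3, IsConj α β → ∀ v : ℤ, δ ^ (-v) * β ∈ Pos → v ≤ u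

lemma braid_rel (i : ZMod 3) : a (i + 1) * a i = a (i + 2) * a (i + 1) := by
  have hmem : (FreeGroup.of (i + 1) * FreeGroup.of i *
      (FreeGroup.of (i + 2) * FreeGroup.of (i + 1))⁻¹ : FreeGroup (ZMod 3)) ∈ braidRels :=
    ⟨i, rfl⟩
  have h1 : (QuotientGroup.mk' (Subgroup.normalClosure braidRels))
      (FreeGroup.of (i + 1) * FreeGroup.of i *
        (FreeGroup.of (i + 2) * FreeGroup.of (i + 1))⁻¹) = 1 :=
    (QuotientGroup.eq_one_iff _).2 (Subgroup.subset_normalClosure hmem)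
  simp only [map_mul, map_inv] at h1
  exact mul_inv_eq_one.mp h1

lemma a_mul_eq_delta (i : ZMod 3) : a (i + 1) * a i = δ := by
  have h : ∀ j : ZMod 3, a (j + 1) * a j = a (j + 1 + 1) * a (j + 1) := by
    intro j
    have := braid_rel j
    rwa [show j + 2 = j + 1 + 1 by ring] at this
  have key : i = 1 ∨ i + 1 = 1 ∨ i + 1 + 1 = 1 := by revert i; decide
  show a (i + 1) * a i = a 2 * a 1
  rcases key with hk | hk | hk
  · subst hk; rfl
  · rw [h i, hk, show (1 : ZMod 3) + 1 = 2 by decide]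
  · rw [h i, h (i + 1), hk, show (1 : ZMod 3) + 1 = 2 by decide]

lemma a_mul_a_add_two (i : ZMod 3) : a i * a (i + 2) = δ := by
  have := a_mul_eq_delta (i + 2)
  rwa [show i + 2 + 1 = i by rw [add_assoc, show (2 : ZMod 3) + 1 = 0 by decide, add_zero]]
    at this

lemma delta_mul_a (j : ZMod 3) : δ * a (j + 1) = a j * δ := by
  have h1 : (a j)⁻¹ * δ = a (j + 2) := by
    rw [← a_mul_a_add_two j]; group
  calc δ * a (j + 1) = a j * ((a j)⁻¹ * δ * a (j + 1)) := by group
    _ = a j * (a (j + 2) * a (j + 1)) := by rw [h1]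
    _ = a j * δ := by rw [show j + 2 = (j + 1) + 1 by ring, a_mul_eq_delta]

lemma ofFn_shift (n : ℕ) (i : ZMod 3) :
    (List.ofFn fun j : Fin n => a (i + (((j : ℕ) + 1 : ℕ) : ZMod 3) + 2)) =
      List.ofFn fun j : Fin n => a (i + 1 + ((j : ℕ) : ZMod 3) + 2) := by
  congr 1
  funext j
  congr 1
  push_cast
  ring

lemma delta_shift (r : ℕ) (i : ZMod 3) :
    δ * (List.ofFn (fun j : Fin r => a (i + 1 + ((j : ℕ) : ZMod 3) + 2))).prod =
      (List.ofFn (fun j : Fin r => a (i + ((j : ℕ) : ZMod 3) + 2))).prod * δ := by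
  induction r generalizing i with
  | zero => simp
  | succ n ih =>
    rw [List.ofFn_succ, List.ofFn_succ, List.prod_cons, List.prod_cons]
    simp only [Fin.val_zero, Fin.val_succ]
    rw [ofFn_shift n (i + 1), ofFn_shift n i]
    have step : δ * a (i + 1 + ((0 : ℕ) : ZMod 3) + 2) = a (i + ((0 : ℕ) : ZMod 3) + 2) * δ := by
      have := delta_mul_a (i + ((0 : ℕ) : ZMod 3) + 2)
      rwa [show i + ((0 : ℕ) : ZMod 3) + 2 + 1 = i + 1 + ((0 : ℕ) : ZMod 3) + 2 by ring] at this
    rw [← mul_assoc, step, mul_assoc, ih (i + 1), ← mul_assoc]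

lemma delta_mul_a_pow (i : ZMod 3) (n : ℕ) : δ * (a (i + 1)) ^ n = (a i) ^ n * δ := by
  induction n with
  | zero => simp
  | succ m ihm =>
    rw [pow_succ', pow_succ', ← mul_assoc, delta_mul_a, mul_assoc, ihm, ← mul_assoc]

lemma delta_pow_eq (i : ZMod 3) (r : ℕ) :
    δ ^ r = (a i) ^ r * (List.ofFn (fun j : Fin r => a (i + ((j : ℕ) : ZMod 3) + 2))).prod := by
  induction r generalizing i with
  | zero => simp
  | succ n ih =>
    rw [List.ofFn_succ, List.prod_cons]
    simp only [Fin.val_zero, Fin.val_succ]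
    rw [ofFn_shift n i]
    have h2 : a i * a (i + ((0 : ℕ) : ZMod 3) + 2) = δ := by
      rw [show i + ((0 : ℕ) : ZMod 3) + 2 = i + 2 by push_cast; ring]
      exact a_mul_a_add_two i
    calc δ ^ (n + 1) = δ * δ ^ n := by rw [pow_succ']
      _ = δ * ((a (i + 1)) ^ n *
          (List.ofFn fun j : Fin n => a (i + 1 + ((j : ℕ) : ZMod 3) + 2)).prod) := by
          rw [← ih (i + 1)]
      _ = (a i) ^ n * (δ *
          (List.ofFn fun j : Fin n => a (i + 1 + ((j : ℕ) : ZMod 3) + 2)).prod) := by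
          rw [← mul_assoc, delta_mul_a_pow, mul_assoc]
      _ = (a i) ^ n * ((a i * a (i + ((0 : ℕ) : ZMod 3) + 2)) *
          (List.ofFn fun j : Fin n => a (i + 1 + ((j : ℕ) : ZMod 3) + 2)).prod) := by
          rw [h2]
      _ = (a i) ^ (n + 1) * (a (i + ((0 : ℕ) : ZMod 3) + 2) *
          (List.ofFn fun j : Fin n => a (i + 1 + ((j : ℕ) : ZMod 3) + 2)).prod) := by
          rw [pow_succ]; group

lemma elen_a_pow (i : ZMod 3) (r : ℕ) : elen ((a i) ^ r) = r := by
  have ha : eHom (a i) = Multiplicative.ofAdd (1 : ℤ) := PresentedGroup.toGroup.of _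
  simp only [elen, map_pow, ha, ← ofAdd_nsmul]
  simp

/-- Lemma 2.2(iii): `(a_i^r)* = a_{i+2} a_{i+3} ⋯ a_{i+r+1}`. -/
theorem rc_pow (i : ZMod 3) (r : ℕ) (hr : 1 ≤ r) :
    rc ((a i) ^ r) =
      (List.ofFn (fun j : Fin r => a (i + ((j : ℕ) : ZMod 3) + 2))).prod := by
  rw [rc, elen_a_pow, zpow_natCast, delta_pow_eq i r]
  group
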